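/- For every tree T of order n ≥ 3 that is not a path, edim(T ⊙ K_1) = n_1(T), the number of leaves of T. -/

import Mathlib

open SimpleGraph

variable {V W : Type*}

/-- Distance (in `ℕ∞`) from a vertex to an edge: the minimum of the distances
to the two endpoints. -/
noncomputable def edgeDist (G : SimpleGraph V) (v : V) (e : Sym2 V) : ℕ∞ :=
  Sym2.lift ⟨fun a b => min (G.edist v a) (G.edist v b),
    fun a b => min_comm _ _⟩ e

/-- A set of vertices is an edge metric generator if every pair of distinct
edges is distinguished by some vertex of the set. -/
def IsEdgeMetricGenerator (G : SimpleGraph V) (S : Set V) : Prop :=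
  ∀ e₁ ∈ G.edgeSet, ∀ e₂ ∈ G.edgeSet, e₁ ≠ e₂ →
    ∃ w ∈ S, edgeDist G w e₁ ≠ edgeDist G w e₂

/-- The edge metric dimension: minimum cardinality of an edge metric generator. -/
noncomputable def edim (G : SimpleGraph V) : ℕ :=
  sInf {n | ∃ S : Set V, S.ncard = n ∧ IsEdgeMetricGenerator G S}


/-- The join of two graphs: disjoint union plus all edges across. -/
def joinGraph (G : SimpleGraph V) (H : SimpleGraph W) : SimpleGraph (V ⊕ W) where
  Adj x y := match x, y with
    | .inl a, .inl b => G.Adj a b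
    | .inr a, .inr b => H.Adj a b
    | .inl _, .inr _ => True
    | .inr _, .inl _ => True
  symm := by constructor; rintro (a | a) (b | b) h <;> simp_all [SimpleGraph.adj_comm]
  loopless := by
    constructor
    rintro (a | a) h
    · exact G.irrefl h
    · exact H.irrefl h

/-- A total dominating set: every vertex has a neighbor in the set. -/
def IsTotalDomSet (G : SimpleGraph V) (D : Set V) : Prop :=
  ∀ v : V, ∃ d ∈ D, G.Adj v d

/-- The total domination number. -/
noncomputable def totalDomNum (G : SimpleGraph V) : ℕ :=
  sInf {n | ∃ D : Set V, D.ncard = n ∧ IsTotalDomSet G D}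

/-- The class 𝒢: for every vertex `u` there is a neighbor `v`
such that `{u, v}` is a minimum total dominating set. -/
def InClassG (G : SimpleGraph V) : Prop :=
  ∀ u : V, ∃ v : V, G.Adj u v ∧ IsTotalDomSet G {u, v} ∧
    ({u, v} : Set V).ncard = totalDomNum G

/-- Lexicographic product `G[H]`. -/
def lexProd (G : SimpleGraph V) (H : SimpleGraph W) : SimpleGraph (V × W) where
  Adj x y := G.Adj x.1 y.1 ∨ (x.1 = y.1 ∧ H.Adj x.2 y.2)
  symm := by constructor; rintro ⟨g, h⟩ ⟨g', h'⟩ (hadj | ⟨rfl, hadj⟩)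
             · exact Or.inl hadj.symm
             · exact Or.inr ⟨rfl, hadj.symm⟩
  loopless := by constructor; rintro ⟨g, h⟩ (hadj | ⟨-, hadj⟩)
                 · exact G.irrefl hadj
                 · exact H.irrefl hadj

/-- Corona product `G ⊙ H`: vertex `(g, none)` is the vertex `g` of `G`, and
`(g, some h)` is the vertex `h` of the copy of `H` attached to `g`. -/
def corona (G : SimpleGraph V) (H : SimpleGraph W) : SimpleGraph (V × Option W) where
  Adj x y := match x, y with
    | (g, none), (g', none) => G.Adj g g'
    | (g, none), (g', some _) => g = g'
    | (g, some _), (g', none) => g = g'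
    | (g, some h), (g', some h') => g = g' ∧ H.Adj h h'
  symm := by constructor; rintro ⟨g, (_ | h)⟩ ⟨g', (_ | h')⟩ hadj <;>
             simp_all [SimpleGraph.adj_comm, eq_comm]
  loopless := by constructor; rintro ⟨g, (_ | h)⟩ hadj <;> simp_all

/-- The closed neighborhood of a vertex. -/
def closedNbhd (G : SimpleGraph V) (u : V) : Set V :=
  insert u (G.neighborSet u)

/-- `u` and `v` are false twins: equal open neighborhoods. -/
def FalseTwin (G : SimpleGraph V) (u v : V) : Prop :=
  G.neighborSet u = G.neighborSet v

/-- `u` and `v` are true twins: equal closed neighborhoods. -/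
def TrueTwin (G : SimpleGraph V) (u v : V) : Prop :=
  closedNbhd G u = closedNbhd G v

/-- The union of the closed neighborhoods of the two endpoints of an edge. -/
def edgeNbhd (G : SimpleGraph V) : Sym2 V → Set V :=
  Sym2.lift ⟨fun a b => closedNbhd G a ∪ closedNbhd G b, fun _ _ => Set.union_comm _ _⟩

/-- Two edges are twin edges: `N[u] ∪ N[v] = N[x] ∪ N[y]`. -/
def TwinEdges (G : SimpleGraph V) (e f : Sym2 V) : Prop :=
  edgeNbhd G e = edgeNbhd G f

/-- The set of edges lying in nontrivial edge-twin classes. -/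
def nontrivTwinEdges (G : SimpleGraph V) : Set (Sym2 V) :=
  {e ∈ G.edgeSet | ∃ f ∈ G.edgeSet, f ≠ e ∧ TwinEdges G e f}

/-- `q(G)`: the number of edges lying in nontrivial edge-twin classes. -/
noncomputable def qval (G : SimpleGraph V) : ℕ := (nontrivTwinEdges G).ncard

/-- `q'(G) = q(G) - m`, where `m` is the number of nontrivial edge-twin classes. -/
noncomputable def q'val (G : SimpleGraph V) : ℕ :=
  qval G - (edgeNbhd G '' nontrivTwinEdges G).ncard

/-- The set of vertices lying in nontrivial false-twin classes. -/
def nontrivFalseTwins (G : SimpleGraph V) : Set V :=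
  {v | ∃ u, u ≠ v ∧ FalseTwin G u v}

/-- The set of vertices lying in nontrivial true-twin classes. -/
def nontrivTrueTwins (G : SimpleGraph V) : Set V :=
  {v | ∃ u, u ≠ v ∧ TrueTwin G u v}

/-- `f'(G) = f(G) - k`: vertices in nontrivial false-twin classes minus the
number of such classes. -/
noncomputable def f'val (G : SimpleGraph V) : ℕ :=
  (nontrivFalseTwins G).ncard - (G.neighborSet '' nontrivFalseTwins G).ncard

/-- `t'(G) = t(G) - ℓ`: vertices in nontrivial true-twin classes minus the
number of such classes. -/
noncomputable def t'val (G : SimpleGraph V) : ℕ :=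
  (nontrivTrueTwins G).ncard - (closedNbhd G '' nontrivTrueTwins G).ncard

/-- A set of representatives for the twin deletion operation: it contains
exactly one vertex from each (false- or true-) twin equivalence class. -/
def IsTwinDeletionSet (G : SimpleGraph V) (R : Set V) : Prop :=
  ∀ v : V, ∃! r : V, r ∈ R ∧ (FalseTwin G v r ∨ TrueTwin G v r)


/-- A major vertex: degree at least 3. -/
def IsMajor (G : SimpleGraph V) (v : V) : Prop := 3 ≤ (G.neighborSet v).ncard

/-- A leaf: degree exactly 1. -/
def IsLeaf (G : SimpleGraph V) (v : V) : Prop := (G.neighborSet v).ncard = 1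

/-- A leaf `u` is a terminal vertex of a major vertex `v` if `v` is the closest
major vertex to `u`. -/
def IsTerminalOf (G : SimpleGraph V) (u v : V) : Prop :=
  IsLeaf G u ∧ IsMajor G v ∧ ∀ w, IsMajor G w → w ≠ v → G.dist u v < G.dist u w

/-- An exterior major vertex: a major vertex with at least one terminal vertex. -/
def IsExteriorMajor (G : SimpleGraph V) (v : V) : Prop :=
  IsMajor G v ∧ ∃ u, IsTerminalOf G u v

/-- The number of leaves of a graph. -/
noncomputable def numLeaves (G : SimpleGraph V) : ℕ := {v | IsLeaf G v}.ncard

/-- The number of exterior major vertices of a graph. -/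
noncomputable def exMajor (G : SimpleGraph V) : ℕ := {v | IsExteriorMajor G v}.ncard


section TreeAux

variable {V : Type*} [DecidableEq V] {T : SimpleGraph V}

/-- In a tree, every path is a geodesic. -/
lemma tree_path_length (hconn : T.Connected) (hac : T.IsAcyclic) {u v : V}
    (p : T.Walk u v) (hp : p.IsPath) : p.length = T.dist u v := by
  obtain ⟨q, hq⟩ := hconn.exists_walk_length_eq_dist u v
  have hq' : q.IsPath := q.isPath_of_length_eq_dist hq
  have : (⟨p, hp⟩ : T.Path u v) = ⟨q, hq'⟩ := hac.path_unique _ _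
  rw [show p = q from congrArg Subtype.val this, hq]

/-- Splitting a tree geodesic at a support vertex. -/
lemma tree_dist_split (hconn : T.Connected) (hac : T.IsAcyclic) {u v w : V}
    (p : T.Walk u v) (hp : p.IsPath) (hw : w ∈ p.support) :
    T.dist u v = T.dist u w + T.dist w v := by
  have h1 := tree_path_length hconn hac _ (hp.takeUntil hw)
  have h2 := tree_path_length hconn hac _ (hp.dropUntil hw)
  have h3 := tree_path_length hconn hac p hp
  rw [← h3, ← h1, ← h2, ← Walk.length_append, Walk.take_spec]

/-- First step of a geodesic. -/
lemma tree_first_step (hconn : T.Connected) (hac : T.IsAcyclic) {x a : V} (h : x ≠ a) :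
    ∃ c, T.Adj x c ∧ T.dist x a = T.dist c a + 1 := by
  obtain ⟨p, hp⟩ := hconn.exists_walk_length_eq_dist x a
  have hp' : p.IsPath := p.isPath_of_length_eq_dist hp
  cases p with
  | nil => exact absurd rfl h
  | cons hadj q =>
    refine ⟨_, hadj, ?_⟩
    rw [← hp, Walk.length_cons, tree_path_length hconn hac q hp'.of_cons]

/-- Neighbors have distance differing by exactly one from any vertex. -/
lemma tree_adj_dist (hconn : T.Connected) (hac : T.IsAcyclic) {a b : V} (hab : T.Adj a b)
    (x : V) : T.dist x a = T.dist x b + 1 ∨ T.dist x b = T.dist x a + 1 := by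
  obtain ⟨p, hp⟩ := hconn.exists_walk_length_eq_dist x b
  have hp' : p.IsPath := p.isPath_of_length_eq_dist hp
  by_cases ha : a ∈ p.support
  · right
    have := tree_dist_split hconn hac p hp' ha
    rw [this, dist_eq_one_iff_adj.mpr hab]
  · left
    have hcat : (p.concat hab.symm).IsPath := by
      rw [← Walk.isPath_reverse_iff, Walk.reverse_concat]
      exact hp'.reverse.cons (by simpa [Walk.support_reverse] using ha)
    have := tree_path_length hconn hac _ hcat
    rw [← this, Walk.length_concat, hp]

set_option linter.unusedSectionVars false

/-- Beyond every oriented edge of a tree, there is a leaf. -/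
lemma tree_leaf_beyond [Fintype V] (hconn : T.Connected) (hac : T.IsAcyclic)
    {a b : V} (hab : T.Adj a b) :
    ∃ l, (T.neighborSet l).ncard = 1 ∧ T.dist l a = T.dist l b + 1 := by
  classical
  set B : Finset V := Finset.univ.filter (fun x => T.dist x a = T.dist x b + 1) with hB
  have hbB : b ∈ B := by
    simp [hB, dist_eq_one_iff_adj.mpr hab.symm]
  obtain ⟨l, hlB, hmax⟩ := B.exists_max_image (T.dist a ·) ⟨b, hbB⟩
  have hl : T.dist l a = T.dist l b + 1 := by simpa [hB] using hlB
  have hla : l ≠ a := by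
    rintro rfl
    rw [SimpleGraph.dist_self] at hl
    omega
  obtain ⟨c, hc, hcd⟩ := tree_first_step hconn hac hla
  refine ⟨l, ?_, hl⟩
  have hns : T.neighborSet l = {c} := by
    ext c'
    simp only [mem_neighborSet, Set.mem_singleton_iff]
    constructor
    · intro hadj'
      rcases tree_adj_dist hconn hac hadj' a with h1 | h2
      · -- dist a l = dist a c' + 1, c' closer; show c' = c
        by_contra hne
        obtain ⟨pc, hpc⟩ := hconn.exists_walk_length_eq_dist c a
        have hpcP : pc.IsPath := pc.isPath_of_length_eq_dist hpc
        obtain ⟨pc', hpc'⟩ := hconn.exists_walk_length_eq_dist c' a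
        have hpc'P : pc'.IsPath := pc'.isPath_of_length_eq_dist hpc'
        have hlc : l ∉ pc.support := by
          intro hmem
          have := tree_dist_split hconn hac pc hpcP hmem
          have h1' : 0 < T.dist c l := hconn.pos_dist_of_ne hc.symm.ne
          have h1c : T.dist a l = T.dist l a := SimpleGraph.dist_comm ..
          have h1c' : T.dist a c' = T.dist c' a := SimpleGraph.dist_comm ..
          omega
        have hlc' : l ∉ pc'.support := by
          intro hmem
          have := tree_dist_split hconn hac pc' hpc'P hmem
          have h1c : T.dist a l = T.dist l a := SimpleGraph.dist_comm ..
          have h1c' : T.dist a c' = T.dist c' a := SimpleGraph.dist_comm ..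
          omega
        have P1 : (Walk.cons hc pc).IsPath := hpcP.cons hlc
        have P2 : (Walk.cons hadj' pc').IsPath := hpc'P.cons hlc'
        have := hac.path_unique ⟨Walk.cons hc pc, P1⟩ ⟨Walk.cons hadj' pc', P2⟩
        have hv := congrArg (fun p : T.Path l a => p.val.getVert 1) this
        exact hne (by simpa [Walk.getVert_cons _ _ one_ne_zero] using hv.symm)
      · -- c' farther from a
        exfalso
        rcases tree_adj_dist hconn hac hadj' b with h3 | h4
        · -- dist b l = dist b c' + 1
          have htri : T.dist c' a ≤ T.dist c' b + 1 := by
            calc T.dist c' a ≤ T.dist c' b + T.dist b a := hconn.dist_triangle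
            _ = T.dist c' b + 1 := by rw [dist_eq_one_iff_adj.mpr hab.symm]
          have c1 : T.dist b l = T.dist l b := SimpleGraph.dist_comm ..
          have c2 : T.dist b c' = T.dist c' b := SimpleGraph.dist_comm ..
          have c3 : T.dist a c' = T.dist c' a := SimpleGraph.dist_comm ..
          have c4 : T.dist a l = T.dist l a := SimpleGraph.dist_comm ..
          omega
        · -- dist b c' = dist b l + 1 : c' ∈ B, contradict max
          have hc'B : c' ∈ B := by
            simp only [hB, Finset.mem_filter, Finset.mem_univ, true_and]
            have c1 : T.dist b l = T.dist l b := SimpleGraph.dist_comm ..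
            have c2 : T.dist b c' = T.dist c' b := SimpleGraph.dist_comm ..
            have c3 : T.dist a c' = T.dist c' a := SimpleGraph.dist_comm ..
            have c4 : T.dist a l = T.dist l a := SimpleGraph.dist_comm ..
            omega
          have := hmax c' hc'B
          omega
    · rintro rfl; exact hc
  rw [hns, Set.ncard_singleton]

/-- The unique crossing edge of an edge-cut in a tree. -/
lemma tree_crossing (hconn : T.Connected) (hac : T.IsAcyclic) {u v x y : V}
    (huv : T.Adj u v) (hxy : T.Adj x y)
    (hx : T.dist x u = T.dist x v + 1) (hy : T.dist y v = T.dist y u + 1) :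
    x = v ∧ y = u := by
  rcases tree_adj_dist hconn hac hxy u with h1 | h2
  swap
  · -- dist u y = dist u x + 1 : contradiction
    exfalso
    have htri : T.dist y v ≤ 1 + T.dist x v := by
      calc T.dist y v ≤ T.dist y x + T.dist x v := hconn.dist_triangle
      _ = 1 + T.dist x v := by rw [dist_eq_one_iff_adj.mpr hxy.symm]
    have c1 : T.dist u y = T.dist y u := SimpleGraph.dist_comm ..
    have c2 : T.dist u x = T.dist x u := SimpleGraph.dist_comm ..
    omega
  · -- dist u x = dist u y + 1
    by_cases hxv : x = v
    · subst hxv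
      refine ⟨rfl, ?_⟩
      have h1' : T.dist x u = 1 := dist_eq_one_iff_adj.mpr huv.symm
      have c1 : T.dist u x = T.dist x u := SimpleGraph.dist_comm ..
      have c2 : T.dist u y = T.dist y u := SimpleGraph.dist_comm ..
      have : T.dist y u = 0 := by omega
      have hr : T.Reachable y u := hconn.preconnected y u
      exact (hr.dist_eq_zero_iff.mp this)
    · exfalso
      obtain ⟨pyu, hpyu⟩ := hconn.exists_walk_length_eq_dist y u
      obtain ⟨pvx, hpvx⟩ := hconn.exists_walk_length_eq_dist v x
      have cux : T.dist u x = T.dist x u := SimpleGraph.dist_comm ..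
      have cuy : T.dist u y = T.dist y u := SimpleGraph.dist_comm ..
      have h1c : T.dist x u = T.dist y u + 1 := by omega
      have P1 : (Walk.cons hxy pyu).IsPath := by
        apply Walk.isPath_of_length_eq_dist
        rw [Walk.length_cons, hpyu, h1c]
      have cvx : T.dist v x = T.dist x v := SimpleGraph.dist_comm ..
      have Q1 : (Walk.cons huv pvx).IsPath := by
        apply Walk.isPath_of_length_eq_dist
        rw [Walk.length_cons, hpvx]
        omega
      have hequ := hac.path_unique ⟨Walk.cons hxy pyu, P1⟩ ⟨(Walk.cons huv pvx).reverse, Q1.reverse⟩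
      have hysup : y ∈ (Walk.cons huv pvx).reverse.support := by
        have : y ∈ (Walk.cons hxy pyu).support := by simp
        rw [show (Walk.cons hxy pyu) = (Walk.cons huv pvx).reverse from congrArg Subtype.val hequ] at this
        exact this
      rw [Walk.support_reverse, List.mem_reverse, Walk.support_cons, List.mem_cons] at hysup
      rcases hysup with hyu | hyvx
      · -- y = u
        have hyu' : y = u := hyu
        have h0 : T.dist y u = 0 := by rw [hyu', SimpleGraph.dist_self]
        have : T.dist x v = 0 := by omega
        exact hxv ((hconn.preconnected x v).dist_eq_zero_iff.mp this)
      · have hpvxP : pvx.IsPath := pvx.isPath_of_length_eq_dist hpvx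
        have hsplit := tree_dist_split hconn hac pvx hpvxP hyvx
        have h5 : T.dist y x = 1 := dist_eq_one_iff_adj.mpr hxy.symm
        have c1 : T.dist v x = T.dist x v := SimpleGraph.dist_comm ..
        have c2 : T.dist v y = T.dist y v := SimpleGraph.dist_comm ..
        omega

/-- Walk length lower bound across an edge cut. -/
lemma tree_cut_walk (hconn : T.Connected) (hac : T.IsAcyclic) {u v : V} (huv : T.Adj u v) :
    ∀ {x y : V} (p : T.Walk x y), T.dist x u = T.dist x v + 1 →
      T.dist y v = T.dist y u + 1 → T.dist x v + 1 + T.dist u y ≤ p.length := by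
  intro x y p
  induction p with
  | nil =>
    intro hx hy
    omega
  | @cons x c y h p' ih =>
    intro hx hy
    rcases tree_adj_dist hconn hac huv c with hcs | hcs
    · -- c on v-side still
      have hb := ih hcs hy
      have htri : T.dist x v ≤ 1 + T.dist c v := by
        calc T.dist x v ≤ T.dist x c + T.dist c v := hconn.dist_triangle
        _ = 1 + T.dist c v := by rw [dist_eq_one_iff_adj.mpr h]
      rw [Walk.length_cons]
      omega
    · -- crossing edge
      obtain ⟨hxv, hcu⟩ := tree_crossing hconn hac huv h hx hcs
      have hb : T.dist u y ≤ p'.length := hcu ▸ dist_le p'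
      have h0 : T.dist x v = 0 := by rw [hxv, SimpleGraph.dist_self]
      rw [Walk.length_cons]
      omega

/-- Distance additivity across an edge cut in a tree. -/
lemma tree_cut_add (hconn : T.Connected) (hac : T.IsAcyclic) {u v x y : V} (huv : T.Adj u v)
    (hx : T.dist x u = T.dist x v + 1) (hy : T.dist y v = T.dist y u + 1) :
    T.dist x y = T.dist x v + 1 + T.dist u y := by
  refine le_antisymm ?_ ?_
  · calc T.dist x y ≤ T.dist x v + T.dist v y := hconn.dist_triangle
    _ ≤ T.dist x v + (T.dist v u + T.dist u y) := by
        exact Nat.add_le_add_left hconn.dist_triangle _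
    _ = T.dist x v + 1 + T.dist u y := by
        rw [dist_eq_one_iff_adj.mpr huv.symm]; ring
  · obtain ⟨p, hp⟩ := hconn.exists_walk_length_eq_dist x y
    rw [← hp]
    exact tree_cut_walk hconn hac huv p hx hy

/-- Distance to a leaf goes through its support vertex. -/
lemma tree_leaf_dist (hconn : T.Connected) (hac : T.IsAcyclic) {l s g : V}
    (hl : T.neighborSet l = {s}) (hg : g ≠ l) : T.dist g l = T.dist g s + 1 := by
  have hlg : l ≠ g := hg.symm
  obtain ⟨c, hc, hcd⟩ := tree_first_step hconn hac hlg
  have hcs : c = s := by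
    have : c ∈ T.neighborSet l := hc
    rwa [hl, Set.mem_singleton_iff] at this
  rw [hcs] at hcd
  have c1 : T.dist g l = T.dist l g := SimpleGraph.dist_comm ..
  have c2 : T.dist g s = T.dist s g := SimpleGraph.dist_comm ..
  omega

/-- If the graph has at least 3 vertices, the neighbor of a leaf is not a leaf. -/
lemma tree_support_not_leaf [Fintype V] (hconn : T.Connected) (h3 : 3 ≤ Fintype.card V)
    {l s : V} (hl : T.neighborSet l = {s}) : T.neighborSet s ≠ {l} := by
  intro hs
  have key : ∀ (x : V) (p : T.Walk x l), x = l ∨ x = s := by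
    intro x p
    induction p with
    | nil => exact Or.inl rfl
    | @cons x z _ h p' ih =>
      rcases ih hl hs with rfl | rfl
      · right
        have : x ∈ T.neighborSet z := h.symm
        rwa [hl, Set.mem_singleton_iff] at this
      · left
        have : x ∈ T.neighborSet z := h.symm
        rwa [hs, Set.mem_singleton_iff] at this
  have huniv : (Set.univ : Set V) ⊆ {l, s} := by
    intro x _
    obtain ⟨p⟩ := hconn.preconnected x l
    rcases key x p with rfl | rfl <;> simp
  have hcard : (Set.univ : Set V).ncard ≤ ({l, s} : Set V).ncard :=
    Set.ncard_le_ncard huniv (Set.toFinite _)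
  rw [Set.ncard_univ] at hcard
  have h2 : ({l, s} : Set V).ncard ≤ 2 :=
    (Set.ncard_insert_le _ _).trans (by rw [Set.ncard_singleton])
  have : Fintype.card V = Nat.card V := (Nat.card_eq_fintype_card).symm
  omega

end TreeAux

section CoronaAux
set_option linter.unusedSectionVars false
open SimpleGraph Walk
variable {V : Type*}

/-- inner vertex -/
abbrev ivx (g : V) : V × Option (Fin 1) := (g, none)
/-- pendant vertex -/
abbrev pvx (g : V) : V × Option (Fin 1) := (g, some 0)

lemma vcasesx (x : V × Option (Fin 1)) : x = ivx x.1 ∨ x = pvx x.1 := by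
  rcases x with ⟨g, (_ | i)⟩
  · left; rfl
  · right; rw [Subsingleton.elim i 0]

variable {T : SimpleGraph V}

lemma cor_adj_cases {x y : V × Option (Fin 1)}
    (h : (corona T (⊥ : SimpleGraph (Fin 1))).Adj x y) : T.Adj x.1 y.1 ∨ x.1 = y.1 := by
  rcases x with ⟨a, (_ | i)⟩ <;> rcases y with ⟨b, (_ | j)⟩
  · exact Or.inl h
  · exact Or.inr h
  · exact Or.inr h
  · exact Or.inr h.1

def ivHom (T : SimpleGraph V) : T →g corona T (⊥ : SimpleGraph (Fin 1)) :=
  ⟨fun g => (g, none), fun {a b} h => h⟩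

lemma cor_adj_iv_iv {a b : V} :
    (corona T (⊥ : SimpleGraph (Fin 1))).Adj (ivx a) (ivx b) ↔ T.Adj a b := Iff.rfl

lemma cor_adj_iv_pv {a b : V} :
    (corona T (⊥ : SimpleGraph (Fin 1))).Adj (ivx a) (pvx b) ↔ a = b := Iff.rfl

lemma cor_adj_pv {g : V} {x : V × Option (Fin 1)} :
    (corona T (⊥ : SimpleGraph (Fin 1))).Adj (pvx g) x ↔ x = ivx g := by
  rcases x with ⟨b, (_ | j)⟩
  · constructor
    · intro h; have : g = b := h; rw [this]
    · intro h; have : b = g := congrArg Prod.fst h; exact this.symm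
  · constructor
    · intro h; exact absurd h.2 (by simp)
    · intro h; simp at h

lemma cor_dist_proj (hconn : T.Connected) :
    ∀ {x y : V × Option (Fin 1)} (p : (corona T (⊥ : SimpleGraph (Fin 1))).Walk x y),
      T.dist x.1 y.1 ≤ p.length := by
  intro x y p
  induction p with
  | nil => rw [SimpleGraph.dist_self]; omega
  | @cons x z y h p' ih =>
    rcases cor_adj_cases h with h1 | h1
    · have htri : T.dist x.1 y.1 ≤ T.dist x.1 z.1 + T.dist z.1 y.1 := hconn.dist_triangle
      have h2 : T.dist x.1 z.1 = 1 := dist_eq_one_iff_adj.mpr h1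
      rw [Walk.length_cons]
      omega
    · rw [Walk.length_cons, h1]
      omega

lemma cor_connected (hconn : T.Connected) :
    (corona T (⊥ : SimpleGraph (Fin 1))).Connected := by
  rw [connected_iff]
  constructor
  · intro x y
    have hx : (corona T (⊥ : SimpleGraph (Fin 1))).Reachable x (ivx x.1) := by
      rcases vcasesx x with h | h
      · rw [h]
      · rw [h]; exact (Adj.reachable (by rw [cor_adj_pv]))
    have hy : (corona T (⊥ : SimpleGraph (Fin 1))).Reachable y (ivx y.1) := by
      rcases vcasesx y with h | h
      · rw [h]
      · rw [h]; exact (Adj.reachable (by rw [cor_adj_pv]))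
    have hmid : (corona T (⊥ : SimpleGraph (Fin 1))).Reachable (ivx x.1) (ivx y.1) :=
      (hconn.preconnected x.1 y.1).map (ivHom T)
    exact (hx.trans hmid).trans hy.symm
  · obtain ⟨g⟩ := hconn.nonempty
    exact ⟨ivx g⟩

lemma cor_dist_iv_iv (hconn : T.Connected) (a b : V) :
    (corona T (⊥ : SimpleGraph (Fin 1))).dist (ivx a) (ivx b) = T.dist a b := by
  refine le_antisymm ?_ ?_
  · obtain ⟨p, hp⟩ := hconn.exists_walk_length_eq_dist a b
    have := dist_le (p.map (ivHom T))
    rwa [Walk.length_map, hp] at this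
  · obtain ⟨p, hp⟩ := (cor_connected hconn).exists_walk_length_eq_dist (ivx a) (ivx b)
    rw [← hp]
    exact cor_dist_proj hconn p

lemma cor_dist_pv (hconn : T.Connected) {g : V} {x : V × Option (Fin 1)} (h : x ≠ pvx g) :
    (corona T (⊥ : SimpleGraph (Fin 1))).dist (pvx g) x
      = (corona T (⊥ : SimpleGraph (Fin 1))).dist (ivx g) x + 1 := by
  have hadj : (corona T (⊥ : SimpleGraph (Fin 1))).Adj (pvx g) (ivx g) := by
    rw [cor_adj_pv]
  refine le_antisymm ?_ ?_
  · have htri := (cor_connected hconn).dist_triangle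
      (u := pvx g) (v := ivx g) (w := x)
    have h1 : (corona T (⊥ : SimpleGraph (Fin 1))).dist (pvx g) (ivx g) = 1 :=
      dist_eq_one_iff_adj.mpr hadj
    omega
  · obtain ⟨p, hp⟩ := (cor_connected hconn).exists_walk_length_eq_dist (pvx g) x
    cases p with
    | nil => exact absurd rfl h.symm
    | @cons _ z _ hz q =>
      rw [cor_adj_pv] at hz
      subst hz
      have := dist_le q
      rw [Walk.length_cons] at hp
      omega

lemma cor_dist_pv_iv (hconn : T.Connected) (a b : V) :
    (corona T (⊥ : SimpleGraph (Fin 1))).dist (pvx a) (ivx b) = T.dist a b + 1 := by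
  rw [cor_dist_pv hconn (by simp), cor_dist_iv_iv hconn]

lemma cor_dist_pv_pv (hconn : T.Connected) {a b : V} (hab : a ≠ b) :
    (corona T (⊥ : SimpleGraph (Fin 1))).dist (pvx a) (pvx b) = T.dist a b + 2 := by
  rw [cor_dist_pv hconn (by simp [hab.symm]), SimpleGraph.dist_comm,
    cor_dist_pv_iv hconn, SimpleGraph.dist_comm]

lemma edist_eq_dist' {W : Type*} {G : SimpleGraph W} {u v : W} (h : G.Reachable u v) :
    G.edist u v = (G.dist u v : ℕ∞) := by
  have hne := edist_ne_top_iff_reachable.mpr h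
  rw [SimpleGraph.dist]
  exact (ENat.coe_toNat hne).symm

lemma edgeDist_mk {W : Type*} (G : SimpleGraph W) (v a b : W) :
    edgeDist G v s(a, b) = min (G.edist v a) (G.edist v b) := rfl

lemma cor_edge_cases {e : Sym2 (V × Option (Fin 1))}
    (he : e ∈ (corona T (⊥ : SimpleGraph (Fin 1))).edgeSet) :
    (∃ a b, T.Adj a b ∧ e = s(ivx a, ivx b)) ∨ (∃ g, e = s(ivx g, pvx g)) := by
  induction e with
  | _ x y =>
    rw [SimpleGraph.mem_edgeSet] at he
    rcases vcasesx x with hx | hx <;> rcases vcasesx y with hy | hy <;>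
      rw [hx, hy] at he ⊢
    · exact Or.inl ⟨x.1, y.1, he, rfl⟩
    · right
      have : x.1 = y.1 := he
      exact ⟨x.1, by rw [this]⟩
    · right
      have hxy : (ivx y.1 : V × Option (Fin 1)) = ivx x.1 := cor_adj_pv.mp he
      have h2 : y.1 = x.1 := by simpa using hxy
      refine ⟨x.1, ?_⟩
      rw [h2, Sym2.eq_swap]
    · exact absurd he.2 (by simp)

end CoronaAux

section MainAux
set_option linter.unusedSectionVars false
set_option maxHeartbeats 1000000
open SimpleGraph Walk
variable {V : Type*} [DecidableEq V] [Fintype V] {T : SimpleGraph V}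

lemma enat_coe_min (m n : ℕ) : ((min m n : ℕ) : ℕ∞) = min (m : ℕ∞) (n : ℕ∞) := by
  rcases le_total m n with h | h
  · rw [min_eq_left h, min_eq_left (by exact_mod_cast h)]
  · rw [min_eq_right h, min_eq_right (by exact_mod_cast h)]

lemma cor_edist (hconn : T.Connected) (x y : V × Option (Fin 1)) :
    (corona T (⊥ : SimpleGraph (Fin 1))).edist x y
      = ((corona T (⊥ : SimpleGraph (Fin 1))).dist x y : ℕ∞) :=
  edist_eq_dist' ((cor_connected hconn).preconnected x y)

lemma cor_E1 (hconn : T.Connected) (g a b : V) :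
    edgeDist (corona T (⊥ : SimpleGraph (Fin 1))) (ivx g) s(ivx a, ivx b)
      = ((min (T.dist g a) (T.dist g b) : ℕ) : ℕ∞) := by
  rw [edgeDist_mk, cor_edist hconn, cor_edist hconn, cor_dist_iv_iv hconn,
    cor_dist_iv_iv hconn, enat_coe_min]

lemma cor_E2 (hconn : T.Connected) (g a : V) :
    edgeDist (corona T (⊥ : SimpleGraph (Fin 1))) (ivx g) s(ivx a, pvx a)
      = ((T.dist g a : ℕ) : ℕ∞) := by
  have hc2 : T.dist a g = T.dist g a := SimpleGraph.dist_comm ..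
  rw [edgeDist_mk, cor_edist hconn, cor_edist hconn, cor_dist_iv_iv hconn,
    SimpleGraph.dist_comm (u := ivx g) (v := pvx a), cor_dist_pv_iv hconn, hc2, ← enat_coe_min]
  congr 1
  omega

lemma cor_E3 (hconn : T.Connected) (g a b : V) :
    edgeDist (corona T (⊥ : SimpleGraph (Fin 1))) (pvx g) s(ivx a, ivx b)
      = ((min (T.dist g a) (T.dist g b) + 1 : ℕ) : ℕ∞) := by
  rw [edgeDist_mk, cor_edist hconn, cor_edist hconn, cor_dist_pv_iv hconn,
    cor_dist_pv_iv hconn, ← enat_coe_min]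
  congr 1
  omega

lemma cor_E4a (hconn : T.Connected) (g : V) :
    edgeDist (corona T (⊥ : SimpleGraph (Fin 1))) (pvx g) s(ivx g, pvx g) = 0 := by
  rw [edgeDist_mk, cor_edist hconn, cor_edist hconn, cor_dist_pv_iv hconn,
    SimpleGraph.dist_self, SimpleGraph.dist_self]
  simp

lemma cor_E4b (hconn : T.Connected) {g a : V} (h : g ≠ a) :
    edgeDist (corona T (⊥ : SimpleGraph (Fin 1))) (pvx g) s(ivx a, pvx a)
      = ((T.dist g a + 1 : ℕ) : ℕ∞) := by
  rw [edgeDist_mk, cor_edist hconn, cor_edist hconn, cor_dist_pv_iv hconn,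
    cor_dist_pv_pv hconn h, ← enat_coe_min]
  congr 1
  omega

/-- The set of pendant vertices over the leaves. -/
def leafPend (T : SimpleGraph V) : Set (V × Option (Fin 1)) :=
  (fun l => pvx l) '' {l | (T.neighborSet l).ncard = 1}

lemma case_pp (hconn : T.Connected) (hac : T.IsAcyclic) {g g' : V} (hgg : g ≠ g') :
    ∃ w ∈ leafPend T,
      edgeDist (corona T (⊥ : SimpleGraph (Fin 1))) w s(ivx g, pvx g)
        ≠ edgeDist (corona T (⊥ : SimpleGraph (Fin 1))) w s(ivx g', pvx g') := by
  by_cases hgl : (T.neighborSet g).ncard = 1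
  · refine ⟨pvx g, ⟨g, hgl, rfl⟩, ?_⟩
    rw [cor_E4a hconn, cor_E4b hconn hgg]
    intro hcontra
    exact absurd hcontra.symm (by simp)
  · obtain ⟨c, hc, hcd⟩ := tree_first_step hconn hac hgg
    obtain ⟨l, hleaf, hl⟩ := tree_leaf_beyond hconn hac hc.symm
    have hlg : l ≠ g := fun h => hgl (h ▸ hleaf)
    refine ⟨pvx l, ⟨l, hleaf, rfl⟩, ?_⟩
    by_cases hlg' : l = g'
    · subst hlg'
      rw [cor_E4a hconn, cor_E4b hconn hlg]
      simp
    · rw [cor_E4b hconn hlg, cor_E4b hconn hlg']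
      have hy : T.dist g' g = T.dist g' c + 1 := by
        have c1 : T.dist g g' = T.dist g' g := SimpleGraph.dist_comm ..
        have c2 : T.dist c g' = T.dist g' c := SimpleGraph.dist_comm ..
        omega
      have := tree_cut_add hconn hac hc.symm hl hy
      simp only [ne_eq, Nat.cast_inj]
      omega

lemma case_ip_core (hconn : T.Connected) (hac : T.IsAcyclic) {g a b : V} (hab : T.Adj a b)
    (hgl : ¬ (T.neighborSet g).ncard = 1) (hside : T.dist g a = T.dist g b + 1) :
    ∃ w ∈ leafPend T,
      edgeDist (corona T (⊥ : SimpleGraph (Fin 1))) w s(ivx g, pvx g)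
        ≠ edgeDist (corona T (⊥ : SimpleGraph (Fin 1))) w s(ivx a, ivx b) := by
  by_cases hgb : g = b
  ·
    subst hgb
    obtain ⟨l, hleaf, hl⟩ := tree_leaf_beyond hconn hac hab.symm
    -- hl : dist l b = dist l a + 1
    have hlg : l ≠ g := fun h => hgl (h ▸ hleaf)
    refine ⟨pvx l, ⟨l, hleaf, rfl⟩, ?_⟩
    rw [cor_E4b hconn hlg, cor_E3 hconn]
    simp only [ne_eq, Nat.cast_inj]
    omega
  · -- g ≠ b, g ≠ a (since dist g a = dist g b + 1 > 0... a could equal g? dist g a ≥ 1 so no)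
    have hga : g ≠ a := by
      rintro rfl
      rw [SimpleGraph.dist_self] at hside
      omega
    obtain ⟨c, hc, hcd⟩ := tree_first_step hconn hac hgb
    -- hc : Adj g c, hcd : dist g b = dist c b + 1
    have hbc : T.dist b g = T.dist b c + 1 := by
      rcases tree_adj_dist hconn hac hc b with h | h
      · exact h
      · have c1 : T.dist b c = T.dist c b := SimpleGraph.dist_comm ..
        have c2 : T.dist b g = T.dist g b := SimpleGraph.dist_comm ..
        omega
    have hacs : T.dist a g = T.dist a c + 1 := by
      rcases tree_adj_dist hconn hac hc a with h | h
      · exact h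
      · exfalso
        have htri : T.dist c a ≤ T.dist c b + 1 := by
          calc T.dist c a ≤ T.dist c b + T.dist b a := hconn.dist_triangle
          _ = T.dist c b + 1 := by rw [dist_eq_one_iff_adj.mpr hab.symm]
        have c1 : T.dist a c = T.dist c a := SimpleGraph.dist_comm ..
        have c2 : T.dist a g = T.dist g a := SimpleGraph.dist_comm ..
        omega
    obtain ⟨l, hleaf, hl⟩ := tree_leaf_beyond hconn hac hc.symm
    -- hl : dist l c = dist l g + 1
    have hlg : l ≠ g := fun h => hgl (h ▸ hleaf)
    have hda := tree_cut_add hconn hac hc.symm hl (by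
      have c2 : T.dist a c = T.dist c a := SimpleGraph.dist_comm ..
      have c3 : T.dist c a = T.dist a c := SimpleGraph.dist_comm ..
      exact hacs)
    have hdb := tree_cut_add hconn hac hc.symm hl hbc
    refine ⟨pvx l, ⟨l, hleaf, rfl⟩, ?_⟩
    rw [cor_E4b hconn hlg, cor_E3 hconn]
    simp only [ne_eq, Nat.cast_inj]
    omega

lemma case_ip (hconn : T.Connected) (hac : T.IsAcyclic) {g a b : V} (hab : T.Adj a b) :
    ∃ w ∈ leafPend T,
      edgeDist (corona T (⊥ : SimpleGraph (Fin 1))) w s(ivx g, pvx g)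
        ≠ edgeDist (corona T (⊥ : SimpleGraph (Fin 1))) w s(ivx a, ivx b) := by
  by_cases hgl : (T.neighborSet g).ncard = 1
  · refine ⟨pvx g, ⟨g, hgl, rfl⟩, ?_⟩
    rw [cor_E4a hconn, cor_E3 hconn]
    intro hcontra
    exact absurd hcontra.symm (by simp)
  · rcases tree_adj_dist hconn hac hab g with hside | hside
    · exact case_ip_core hconn hac hab hgl hside
    · obtain ⟨w, hw, hne⟩ := case_ip_core hconn hac hab.symm hgl hside
      refine ⟨w, hw, ?_⟩
      rwa [Sym2.eq_swap (a := ivx b)] at hne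

lemma case_ii_core (hconn : T.Connected) (hac : T.IsAcyclic) {a b c d : V} (hcd : T.Adj c d)
    (ha : T.dist a d = T.dist a c + 1) (hb : T.dist b d = T.dist b c + 1) :
    ∃ w ∈ leafPend T,
      edgeDist (corona T (⊥ : SimpleGraph (Fin 1))) w s(ivx a, ivx b)
        ≠ edgeDist (corona T (⊥ : SimpleGraph (Fin 1))) w s(ivx c, ivx d) := by
  obtain ⟨l, hleaf, hl⟩ := tree_leaf_beyond hconn hac hcd
  -- hl : dist l c = dist l d + 1
  have hda := tree_cut_add hconn hac hcd hl ha
  have hdb := tree_cut_add hconn hac hcd hl hb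
  refine ⟨pvx l, ⟨l, hleaf, rfl⟩, ?_⟩
  rw [cor_E3 hconn, cor_E3 hconn]
  simp only [ne_eq, Nat.cast_inj]
  omega

lemma case_ii (hconn : T.Connected) (hac : T.IsAcyclic) {a b c d : V}
    (hab : T.Adj a b) (hcd : T.Adj c d)
    (hne : s(ivx a, ivx b) ≠ (s(ivx c, ivx d) : Sym2 (V × Option (Fin 1)))) :
    ∃ w ∈ leafPend T,
      edgeDist (corona T (⊥ : SimpleGraph (Fin 1))) w s(ivx a, ivx b)
        ≠ edgeDist (corona T (⊥ : SimpleGraph (Fin 1))) w s(ivx c, ivx d) := by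
  rcases tree_adj_dist hconn hac hcd a with hA | hA <;>
    rcases tree_adj_dist hconn hac hcd b with hB | hB
  · -- a, b both on c-side? hA : dist a c = dist a d + 1 means a on d-side
    -- both on d-side: use leaf beyond c
    obtain ⟨w, hw, hwe⟩ := case_ii_core hconn hac hcd.symm hA hB
    refine ⟨w, hw, ?_⟩
    rwa [Sym2.eq_swap (a := ivx d) (b := ivx c)] at hwe
  · -- a on d-side, b on c-side: crossing with u=c, v=d : x=a,y=b gives a=d, b=c
    exfalso
    obtain ⟨rfl1, rfl2⟩ := tree_crossing hconn hac hcd hab hA hB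
    apply hne
    rw [rfl1, rfl2, Sym2.eq_swap]
  · exfalso
    obtain ⟨rfl1, rfl2⟩ := tree_crossing hconn hac hcd.symm hab hA hB
    apply hne
    rw [rfl1, rfl2]
  · exact case_ii_core hconn hac hcd hA hB

lemma cor_generator (hconn : T.Connected) (hac : T.IsAcyclic) :
    IsEdgeMetricGenerator (corona T (⊥ : SimpleGraph (Fin 1))) (leafPend T) := by
  intro e₁ he₁ e₂ he₂ hne
  rcases cor_edge_cases he₁ with ⟨a, b, hab, rfl⟩ | ⟨g, rfl⟩ <;>
    rcases cor_edge_cases he₂ with ⟨c, d, hcd, rfl⟩ | ⟨g', rfl⟩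
  · exact case_ii hconn hac hab hcd hne
  · obtain ⟨w, hw, hwe⟩ := case_ip hconn hac (g := g') hab
    exact ⟨w, hw, hwe.symm⟩
  · exact case_ip hconn hac hcd
  · apply case_pp hconn hac
    rintro rfl
    exact hne rfl

end MainAux

section LowerAux
set_option linter.unusedSectionVars false
set_option maxHeartbeats 1000000
open SimpleGraph Walk
variable {V : Type*} [DecidableEq V] [Fintype V] {T : SimpleGraph V}

lemma tree_support_not_leaf' (hconn : T.Connected) (h3 : 3 ≤ Fintype.card V)
    {l s : V} (hl : T.neighborSet l = {s}) : (T.neighborSet s).ncard ≠ 1 := by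
  intro h1
  obtain ⟨t, ht⟩ := Set.ncard_eq_one.mp h1
  have hadj : T.Adj l s := by
    have : s ∈ T.neighborSet l := by rw [hl]; rfl
    exact this
  have hlt : l ∈ T.neighborSet s := hadj.symm
  rw [ht, Set.mem_singleton_iff] at hlt
  exact tree_support_not_leaf hconn h3 hl (by rw [ht, ← hlt])

lemma cor_W1 (hconn : T.Connected) (hac : T.IsAcyclic) {S : Set (V × Option (Fin 1))}
    (hgen : IsEdgeMetricGenerator (corona T (⊥ : SimpleGraph (Fin 1))) S)
    {l s : V} (hl : T.neighborSet l = {s}) :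
    ∃ w ∈ S, w ∈ ({pvx s, ivx l, pvx l} : Set (V × Option (Fin 1))) := by
  have hadj : T.Adj s l := by
    have : s ∈ T.neighborSet l := by rw [hl]; rfl
    exact this.symm
  have he₁ : s(ivx s, pvx s) ∈ (corona T (⊥ : SimpleGraph (Fin 1))).edgeSet :=
    (mem_edgeSet _).mpr (cor_adj_iv_pv.mpr rfl)
  have he₂ : s(ivx s, ivx l) ∈ (corona T (⊥ : SimpleGraph (Fin 1))).edgeSet :=
    (mem_edgeSet _).mpr (cor_adj_iv_iv.mpr hadj)
  have hne : (s(ivx s, pvx s) : Sym2 (V × Option (Fin 1))) ≠ s(ivx s, ivx l) := by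
    simp [Sym2.eq_iff, ivx, pvx]
  obtain ⟨w, hwS, hwd⟩ := hgen _ he₁ _ he₂ hne
  refine ⟨w, hwS, ?_⟩
  by_contra hw
  simp only [Set.mem_insert_iff, Set.mem_singleton_iff, not_or] at hw
  obtain ⟨hw1, hw2, hw3⟩ := hw
  apply hwd
  rcases vcasesx w with hwe | hwe
  · have hgl : w.1 ≠ l := fun h => hw2 (hwe.trans (by rw [h]))
    rw [hwe, cor_E2 hconn, cor_E1 hconn]
    have := tree_leaf_dist hconn hac hl hgl
    congr 1
    omega
  · have hgs : w.1 ≠ s := fun h => hw1 (hwe.trans (by rw [h]))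
    have hgl : w.1 ≠ l := fun h => hw3 (hwe.trans (by rw [h]))
    rw [hwe, cor_E4b hconn hgs, cor_E3 hconn]
    have := tree_leaf_dist hconn hac hl hgl
    congr 1
    omega

lemma cor_W2 (hconn : T.Connected) (hac : T.IsAcyclic) {S : Set (V × Option (Fin 1))}
    (hgen : IsEdgeMetricGenerator (corona T (⊥ : SimpleGraph (Fin 1))) S)
    {l₁ l₂ s : V} (h12 : l₁ ≠ l₂)
    (hl₁ : T.neighborSet l₁ = {s}) (hl₂ : T.neighborSet l₂ = {s}) :
    ∃ w ∈ S, w ∈ ({ivx l₁, pvx l₁, ivx l₂, pvx l₂} : Set (V × Option (Fin 1))) := by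
  have hadj₁ : T.Adj s l₁ := by
    have : s ∈ T.neighborSet l₁ := by rw [hl₁]; rfl
    exact this.symm
  have hadj₂ : T.Adj s l₂ := by
    have : s ∈ T.neighborSet l₂ := by rw [hl₂]; rfl
    exact this.symm
  have hne : (s(ivx s, ivx l₁) : Sym2 (V × Option (Fin 1))) ≠ s(ivx s, ivx l₂) := by
    simp only [Sym2.eq_iff, ne_eq, not_or]
    constructor
    · rintro ⟨-, h⟩
      exact h12 (by simpa [ivx] using h)
    · rintro ⟨h, -⟩
      exact hadj₂.ne (by simpa [ivx] using h)
  have he₁ : s(ivx s, ivx l₁) ∈ (corona T (⊥ : SimpleGraph (Fin 1))).edgeSet :=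
    (mem_edgeSet _).mpr (cor_adj_iv_iv.mpr hadj₁)
  have he₂ : s(ivx s, ivx l₂) ∈ (corona T (⊥ : SimpleGraph (Fin 1))).edgeSet :=
    (mem_edgeSet _).mpr (cor_adj_iv_iv.mpr hadj₂)
  obtain ⟨w, hwS, hwd⟩ := hgen _ he₁ _ he₂ hne
  refine ⟨w, hwS, ?_⟩
  by_contra hw
  simp only [Set.mem_insert_iff, Set.mem_singleton_iff, not_or] at hw
  obtain ⟨hw1, hw2, hw3, hw4⟩ := hw
  apply hwd
  rcases vcasesx w with hwe | hwe
  · have hg1 : w.1 ≠ l₁ := fun h => hw1 (hwe.trans (by rw [h]))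
    have hg2 : w.1 ≠ l₂ := fun h => hw3 (hwe.trans (by rw [h]))
    rw [hwe, cor_E1 hconn, cor_E1 hconn]
    have h1 := tree_leaf_dist hconn hac hl₁ hg1
    have h2 := tree_leaf_dist hconn hac hl₂ hg2
    congr 1
    omega
  · have hg1 : w.1 ≠ l₁ := fun h => hw2 (hwe.trans (by rw [h]))
    have hg2 : w.1 ≠ l₂ := fun h => hw4 (hwe.trans (by rw [h]))
    rw [hwe, cor_E3 hconn, cor_E3 hconn]
    have h1 := tree_leaf_dist hconn hac hl₁ hg1
    have h2 := tree_leaf_dist hconn hac hl₂ hg2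
    congr 1
    omega

lemma memB_fst {l : V} {w : V × Option (Fin 1)}
    (h : w ∈ ({ivx l, pvx l} : Set (V × Option (Fin 1)))) : w.1 = l := by
  rcases h with h | h <;> rw [h]

lemma cor_lower (hconn : T.Connected) (hac : T.IsAcyclic) (h3 : 3 ≤ Fintype.card V)
    {S : Set (V × Option (Fin 1))}
    (hgen : IsEdgeMetricGenerator (corona T (⊥ : SimpleGraph (Fin 1))) S) :
    {v : V | (T.neighborSet v).ncard = 1}.ncard ≤ S.ncard := by
  classical
  set L := {v : V | (T.neighborSet v).ncard = 1} with hL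
  have hchoice : ∀ l : V, l ∈ L → ∃ s, T.neighborSet l = {s} :=
    fun l hl => Set.ncard_eq_one.mp hl
  choose! sup hsup using hchoice
  set F : V → V × Option (Fin 1) := fun l =>
    if h : (S ∩ ({ivx l, pvx l} : Set (V × Option (Fin 1)))).Nonempty then h.choose
    else pvx (sup l) with hF
  apply Set.ncard_le_ncard_of_injOn F ?_ ?_ (S.toFinite)
  · -- maps to
    intro l hl
    by_cases h : (S ∩ ({ivx l, pvx l} : Set (V × Option (Fin 1)))).Nonempty
    · have := h.choose_spec.1
      simpa [hF, dif_pos h] using this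
    · obtain ⟨w, hwS, hwmem⟩ := cor_W1 hconn hac hgen (hsup l hl)
      have hFl : F l = pvx (sup l) := by simp only [hF]; rw [dif_neg h]
      rcases hwmem with hwm | hwm | hwm
      · rw [hFl, ← hwm]
        exact hwS
      · exact absurd ⟨w, hwS, by rw [hwm]; left; rfl⟩ h
      · exact absurd ⟨w, hwS, by rw [hwm]; right; rfl⟩ h
  · -- injective on L
    intro l₁ h₁ l₂ h₂ heq
    by_contra hne12
    by_cases c₁ : (S ∩ ({ivx l₁, pvx l₁} : Set (V × Option (Fin 1)))).Nonempty <;>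
      by_cases c₂ : (S ∩ ({ivx l₂, pvx l₂} : Set (V × Option (Fin 1)))).Nonempty
    · have e₁ : F l₁ = c₁.choose := by simp only [hF]; rw [dif_pos c₁]
      have e₂ : F l₂ = c₂.choose := by simp only [hF]; rw [dif_pos c₂]
      have m₁ : (F l₁).1 = l₁ := by rw [e₁]; exact memB_fst c₁.choose_spec.2
      have m₂ : (F l₂).1 = l₂ := by rw [e₂]; exact memB_fst c₂.choose_spec.2
      exact hne12 (by rw [← m₁, ← m₂, heq])
    · have e₁ : F l₁ = c₁.choose := by simp only [hF]; rw [dif_pos c₁]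
      have e₂ : F l₂ = pvx (sup l₂) := by simp only [hF]; rw [dif_neg c₂]
      have m₁ : (F l₁).1 = l₁ := by rw [e₁]; exact memB_fst c₁.choose_spec.2
      have : sup l₂ = l₁ := by rw [← m₁, heq, e₂]
      exact tree_support_not_leaf' hconn h3 (hsup l₂ h₂) (by rw [this]; exact h₁)
    · have e₁ : F l₁ = pvx (sup l₁) := by simp only [hF]; rw [dif_neg c₁]
      have e₂ : F l₂ = c₂.choose := by simp only [hF]; rw [dif_pos c₂]
      have m₂ : (F l₂).1 = l₂ := by rw [e₂]; exact memB_fst c₂.choose_spec.2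
      have : sup l₁ = l₂ := by rw [← m₂, ← heq, e₁]
      exact tree_support_not_leaf' hconn h3 (hsup l₁ h₁) (by rw [this]; exact h₂)
    · have e₁ : F l₁ = pvx (sup l₁) := by simp only [hF]; rw [dif_neg c₁]
      have e₂ : F l₂ = pvx (sup l₂) := by simp only [hF]; rw [dif_neg c₂]
      have hss : sup l₁ = sup l₂ := by
        have := e₁ ▸ e₂ ▸ heq
        injection this with h1 h2
      obtain ⟨w, hwS, hwmem⟩ := cor_W2 hconn hac hgen hne12 (hsup l₁ h₁) (hss ▸ hsup l₂ h₂)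
      rcases hwmem with hm | hm | hm | hm
      · exact c₁ ⟨w, hwS, by rw [hm]; left; rfl⟩
      · exact c₁ ⟨w, hwS, by rw [hm]; right; rfl⟩
      · exact c₂ ⟨w, hwS, by rw [hm]; left; rfl⟩
      · exact c₂ ⟨w, hwS, by rw [hm]; right; rfl⟩

end LowerAux

theorem edim_corona_tree_eq_numLeaves {V : Type*} [Fintype V] (T : SimpleGraph V)
    (hconn : T.Connected) (hac : T.IsAcyclic) (h3 : 3 ≤ Fintype.card V)
    (hnp : ¬ ∃ n : ℕ, Nonempty (T ≃g pathGraph n)) :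
    edim (corona T (⊥ : SimpleGraph (Fin 1))) = numLeaves T := by
  classical
  have hgen := cor_generator hconn hac
  have hinj : Function.Injective (pvx (g := ·) : V → V × Option (Fin 1)) := by
    intro a b h
    injection h
  have hcardS : (leafPend T).ncard = numLeaves T := by
    unfold leafPend numLeaves
    exact Set.ncard_image_of_injective _ hinj
  have hmem : numLeaves T ∈
      {n | ∃ S : Set (V × Option (Fin 1)), S.ncard = n ∧
        IsEdgeMetricGenerator (corona T (⊥ : SimpleGraph (Fin 1))) S} :=
    ⟨leafPend T, hcardS, hgen⟩
  refine le_antisymm (Nat.sInf_le hmem) (le_csInf ⟨_, hmem⟩ ?_)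
  rintro n ⟨S, rfl, hSgen⟩
  exact cor_lower hconn hac h3 hSgen
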